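/- For every integer m ≥ 1, the multiple zeta value ζ(2,2,...,2) with m repetitions of 2 equals π^(2m)/(2m+1)!. -/

import Mathlib

/-- The multiple zeta value `ζ(n₁,…,n_d) = ∑_{0 < k₁ < ⋯ < k_d} 1/(k₁^{n₁} ⋯ k_d^{n_d})`,
defined as a sum over strictly increasing tuples of positive integers. -/
noncomputable def mzv (ns : List ℕ) : ℝ :=
  ∑' f : {f : Fin ns.length → ℕ // StrictMono f ∧ ∀ i, 0 < f i},
    ∏ i : Fin ns.length, (1 : ℝ) / (f.1 i : ℝ) ^ ns.get i

namespace HoffmanAux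

open Real Filter Finset Topology
open scoped ENNReal

/-- The type of strictly increasing positive tuples of length `m`. -/
abbrev T (m : ℕ) := {f : Fin m → ℕ // StrictMono f ∧ ∀ i, 0 < f i}

/-- ENNReal-valued coefficient: `ζ(2,…,2)` with `m` twos. -/
noncomputable def C (m : ℕ) : ℝ≥0∞ :=
  ∑' f : T m, ∏ i : Fin m, ENNReal.ofReal (1 / ((f.1 i : ℝ)) ^ 2)

/-- Generating function as ENNReal sum over finsets. -/
noncomputable def F (t : ℝ) : ℝ≥0∞ :=
  ∑' S : Finset ℕ, ∏ j ∈ S, ENNReal.ofReal (t / ((j : ℝ) + 1) ^ 2)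

lemma tendsto_sinh_prod (x : ℝ) (hx : 0 < x) :
    Tendsto (fun n : ℕ => ∏ j ∈ Finset.range n, ((1 : ℝ) + x ^ 2 / ((j : ℝ) + 1) ^ 2)) atTop
      (𝓝 (Real.sinh (π * x) / (π * x))) := by
  have h := Complex.tendsto_euler_sin_prod (x * Complex.I)
  have hc : (π * (x * Complex.I) : ℂ) ≠ 0 := by
    refine mul_ne_zero (by exact_mod_cast Real.pi_ne_zero)
      (mul_ne_zero (by exact_mod_cast hx.ne') Complex.I_ne_zero)
  have h2 := h.div_const (π * (x * Complex.I))
  simp only [mul_div_assoc, mul_div_cancel_left₀ _ hc] at h2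
  have hterm : ∀ n : ℕ, (∏ j ∈ Finset.range n,
      ((1 : ℂ) - (x * Complex.I) ^ 2 / ((j : ℂ) + 1) ^ 2)) =
      ((∏ j ∈ Finset.range n, ((1 : ℝ) + x ^ 2 / ((j : ℝ) + 1) ^ 2) : ℝ) : ℂ) := by
    intro n
    rw [Complex.ofReal_prod]
    refine Finset.prod_congr rfl fun j _ => ?_
    have : (x * Complex.I) ^ 2 = -(x : ℂ) ^ 2 := by
      rw [mul_pow, Complex.I_sq]; ring
    rw [this]
    push_cast
    ring
  have hlim : (Complex.sin (π * (x * Complex.I)) / (π * (x * Complex.I))) =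
      ((Real.sinh (π * x) / (π * x) : ℝ) : ℂ) := by
    have h3 : (π * (x * Complex.I) : ℂ) = ((π * x : ℝ) : ℂ) * Complex.I := by push_cast; ring
    rw [h3, Complex.sin_mul_I, mul_comm (Complex.sinh _) Complex.I,
      mul_comm ((π * x : ℝ) : ℂ) Complex.I, mul_div_mul_left _ _ Complex.I_ne_zero,
      Complex.ofReal_div, Complex.ofReal_sinh]
  simp_rw [hterm, hlim] at h2
  exact Filter.tendsto_ofReal_iff.mp h2

lemma F_eq_iSup (t : ℝ) :
    F t = ⨆ N : ℕ, ∏ j ∈ Finset.range N, (1 + ENNReal.ofReal (t / ((j : ℝ) + 1) ^ 2)) := by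
  rw [F, ENNReal.tsum_eq_iSup_sum' (fun N : ℕ => (Finset.range N).powerset) ?_]
  · congr 1
    funext N
    simp_rw [add_comm (1 : ℝ≥0∞), Finset.prod_add, Finset.prod_const_one, mul_one]
  · intro s
    refine ⟨s.sup fun S => S.sup (· + 1), fun S hS => Finset.mem_powerset.2 fun j hj => ?_⟩
    rw [Finset.mem_range]
    calc j < j + 1 := Nat.lt_succ_self j
    _ ≤ S.sup (· + 1) := Finset.le_sup (f := (· + 1)) hj
    _ ≤ _ := Finset.le_sup (f := fun S => S.sup (· + 1)) hS

lemma F_eq_sinh (t : ℝ) (ht : 0 < t) :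
    F t = ENNReal.ofReal (Real.sinh (π * Real.sqrt t) / (π * Real.sqrt t)) := by
  rw [F_eq_iSup]
  have hb : ∀ N : ℕ, ∏ j ∈ Finset.range N, (1 + ENNReal.ofReal (t / ((j : ℝ) + 1) ^ 2)) =
      ENNReal.ofReal (∏ j ∈ Finset.range N, (1 + t / ((j : ℝ) + 1) ^ 2)) := by
    intro N
    rw [ENNReal.ofReal_prod_of_nonneg]
    · refine Finset.prod_congr rfl fun j _ => ?_
      rw [ENNReal.ofReal_add zero_le_one (by positivity), ENNReal.ofReal_one]
    · intro j _
      positivity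
  have hmono : Monotone fun N : ℕ =>
      ∏ j ∈ Finset.range N, (1 + ENNReal.ofReal (t / ((j : ℝ) + 1) ^ 2)) := by
    refine monotone_nat_of_le_succ fun N => ?_
    rw [Finset.prod_range_succ]
    exact le_mul_of_one_le_right' le_self_add
  have hx : 0 < Real.sqrt t := Real.sqrt_pos.2 ht
  have hlim := tendsto_sinh_prod (Real.sqrt t) hx
  have hsq : Real.sqrt t ^ 2 = t := Real.sq_sqrt ht.le
  rw [hsq] at hlim
  have h2 : Tendsto (fun N : ℕ => ∏ j ∈ Finset.range N,
      (1 + ENNReal.ofReal (t / ((j : ℝ) + 1) ^ 2))) atTop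
      (𝓝 (ENNReal.ofReal (Real.sinh (π * Real.sqrt t) / (π * Real.sqrt t)))) := by
    simp_rw [hb]
    exact ENNReal.tendsto_ofReal hlim
  exact tendsto_nhds_unique (tendsto_atTop_iSup hmono) h2

lemma sub_one_strictMono {m : ℕ} (f : T m) : StrictMono fun i => f.1 i - 1 := by
  intro i j hij
  have h1 := f.2.1 hij
  have h2 := f.2.2 i
  show f.1 i - 1 < f.1 j - 1
  omega

/-- Finsets of `ℕ` of card `m` are equivalent to strictly increasing positive tuples. -/
noncomputable def cardEquiv (m : ℕ) : {S : Finset ℕ // S.card = m} ≃ T m where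
  toFun S := ⟨fun i => S.1.orderEmbOfFin S.2 i + 1,
    fun i j hij => by
      have := (S.1.orderEmbOfFin S.2).strictMono hij
      show S.1.orderEmbOfFin S.2 i + 1 < S.1.orderEmbOfFin S.2 j + 1
      omega,
    fun i => Nat.succ_pos _⟩
  invFun f := ⟨Finset.image (fun i => f.1 i - 1) Finset.univ, by
    rw [Finset.card_image_of_injective _ (sub_one_strictMono f).injective,
      Finset.card_univ, Fintype.card_fin]⟩
  left_inv S := by
    refine Subtype.ext ?_
    simp only [Nat.add_sub_cancel]
    refine Finset.coe_injective ?_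
    rw [Finset.coe_image, Finset.coe_univ, Set.image_univ, Finset.range_orderEmbOfFin]
  right_inv f := by
    refine Subtype.ext (funext fun i => ?_)
    have key := Finset.orderEmbOfFin_unique
      (s := Finset.image (fun i => f.1 i - 1) Finset.univ)
      (f := fun i => f.1 i - 1)
      (by rw [Finset.card_image_of_injective _ (sub_one_strictMono f).injective,
        Finset.card_univ, Fintype.card_fin])
      (fun i => Finset.mem_image_of_mem _ (Finset.mem_univ i))
      (sub_one_strictMono f)
    have hkey := congrFun key.symm i
    simp only at hkey ⊢
    have := f.2.2 i
    omega

lemma cardEquiv_symm_coe {m : ℕ} (f : T m) :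
    ((cardEquiv m).symm f).1 = Finset.image (fun i => f.1 i - 1) Finset.univ := rfl

lemma F_eq_tsum_C (t : ℝ) (ht : 0 ≤ t) :
    F t = ∑' m : ℕ, C m * ENNReal.ofReal t ^ m := by
  rw [F, ← (Equiv.sigmaFiberEquiv (fun S : Finset ℕ => S.card)).tsum_eq, ENNReal.tsum_sigma']
  congr 1
  funext m
  rw [← ((cardEquiv m).symm).tsum_eq]
  have hterm : ∀ f : T m,
      (∏ j ∈ ((cardEquiv m).symm f).1, ENNReal.ofReal (t / ((j : ℝ) + 1) ^ 2)) =
      ENNReal.ofReal t ^ m * ∏ i : Fin m, ENNReal.ofReal (1 / ((f.1 i : ℝ)) ^ 2) := by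
    intro f
    rw [cardEquiv_symm_coe, Finset.prod_image (fun i _ j _ h =>
      (sub_one_strictMono f).injective h)]
    have h1 : ∀ i : Fin m, ((((f.1 i - 1 : ℕ) : ℝ)) + 1) = (f.1 i : ℝ) := by
      intro i
      have := f.2.2 i
      have : ((f.1 i - 1 : ℕ) : ℝ) = (f.1 i : ℝ) - 1 := by
        push_cast [Nat.cast_sub this]; ring
      rw [this]; ring
    calc (∏ i : Fin m, ENNReal.ofReal (t / (((f.1 i - 1 : ℕ) : ℝ) + 1) ^ 2))
        = ∏ i : Fin m, (ENNReal.ofReal t * ENNReal.ofReal (1 / ((f.1 i : ℝ)) ^ 2)) := by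
          refine Finset.prod_congr rfl fun i _ => ?_
          rw [h1 i, ← ENNReal.ofReal_mul ht]
          congr 1
          ring
      _ = ENNReal.ofReal t ^ m * ∏ i : Fin m, ENNReal.ofReal (1 / ((f.1 i : ℝ)) ^ 2) := by
          rw [Finset.prod_mul_distrib, Finset.prod_const, Finset.card_univ, Fintype.card_fin]
  simp only [Equiv.sigmaFiberEquiv, Equiv.coe_fn_mk]
  rw [tsum_congr hterm, ENNReal.tsum_mul_left, C, mul_comm]

lemma tsum_C_ne_top : (∑' m : ℕ, C m) ≠ ⊤ := by
  have h1 := (F_eq_tsum_C 1 zero_le_one).symm.trans (F_eq_sinh 1 one_pos)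
  simp only [ENNReal.ofReal_one, one_pow, mul_one] at h1
  rw [h1]
  exact ENNReal.ofReal_ne_top

lemma C_ne_top (m : ℕ) : C m ≠ ⊤ := ENNReal.ne_top_of_tsum_ne_top tsum_C_ne_top m

/-- Real-valued coefficients. -/
noncomputable def c (m : ℕ) : ℝ := (C m).toReal

lemma c_nonneg (m : ℕ) : 0 ≤ c m := ENNReal.toReal_nonneg

lemma hasSum_c (t : ℝ) (ht : 0 < t) (ht1 : t ≤ 1) :
    HasSum (fun m : ℕ => c m * t ^ m)
      (Real.sinh (π * Real.sqrt t) / (π * Real.sqrt t)) := by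
  have h1 := (F_eq_tsum_C t ht.le).symm.trans (F_eq_sinh t ht)
  have hne : (∑' m : ℕ, C m * ENNReal.ofReal t ^ m) ≠ ⊤ := by
    rw [h1]; exact ENNReal.ofReal_ne_top
  have hterm : ∀ m : ℕ, (C m * ENNReal.ofReal t ^ m).toReal = c m * t ^ m := by
    intro m
    rw [ENNReal.toReal_mul, ENNReal.toReal_pow, ENNReal.toReal_ofReal ht.le]
    rfl
  have hsum := ENNReal.summable_toReal hne
  simp_rw [hterm] at hsum
  have htsum : (∑' m : ℕ, c m * t ^ m) = Real.sinh (π * Real.sqrt t) / (π * Real.sqrt t) := by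
    have := ENNReal.tsum_toReal_eq (f := fun m => C m * ENNReal.ofReal t ^ m)
      (fun m => ENNReal.mul_ne_top (C_ne_top m) (by simp [ENNReal.pow_ne_top]))
    simp_rw [hterm] at this
    rw [← this, h1, ENNReal.toReal_ofReal]
    have hx : 0 < π * Real.sqrt t := mul_pos Real.pi_pos (Real.sqrt_pos.2 ht)
    positivity
  exact htsum ▸ hsum.hasSum

lemma hasSum_d (t : ℝ) (ht : 0 < t) :
    HasSum (fun m : ℕ => π ^ (2 * m) / (Nat.factorial (2 * m + 1)) * t ^ m)
      (Real.sinh (π * Real.sqrt t) / (π * Real.sqrt t)) := by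
  have hx : 0 < π * Real.sqrt t := mul_pos Real.pi_pos (Real.sqrt_pos.2 ht)
  have h := (Real.hasSum_sinh (π * Real.sqrt t)).div_const (π * Real.sqrt t)
  refine HasSum.congr_fun h fun m => ?_
  have hfac : ((2 * m + 1).factorial : ℝ) ≠ 0 := by
    exact_mod_cast (Nat.factorial_pos _).ne'
  have hpow : (π * Real.sqrt t) ^ (2 * m + 1) =
      π ^ (2 * m) * t ^ m * (π * Real.sqrt t) := by
    have h2 : Real.sqrt t ^ (2 * m) = t ^ m := by
      rw [pow_mul, Real.sq_sqrt ht.le]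
    rw [pow_succ, mul_pow, h2]
  rw [hpow]
  field_simp

lemma coeff_ext (a b : ℕ → ℝ) (ha : ∀ m, 0 ≤ a m) (hb : ∀ m, 0 ≤ b m)
    (hsa : Summable a) (hsb : Summable b)
    (h : ∀ t : ℝ, 0 < t → t ≤ 1 → ∑' m, a m * t ^ m = ∑' m, b m * t ^ m) :
    a = b := by
  have hsum : ∀ (u : ℕ → ℝ), (∀ k, 0 ≤ u k) → Summable u → ∀ t : ℝ, 0 < t → t ≤ 1 →
      Summable (fun k => u k * t ^ k) := by
    intro u hu hsu t ht ht1
    refine hsu.of_nonneg_of_le (fun k => mul_nonneg (hu k) (by positivity)) fun k => ?_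
    calc u k * t ^ k ≤ u k * 1 :=
          mul_le_mul_of_nonneg_left (pow_le_one₀ ht.le ht1) (hu k)
      _ = u k := mul_one _
  have htail : ∀ (u : ℕ → ℝ) (n : ℕ), Summable u → Summable (fun k => u (k + n)) :=
    fun u n hu => (summable_nat_add_iff n).2 hu
  funext m
  induction m using Nat.strong_induction_on with
  | _ m ih =>
  have key : ∀ t : ℝ, 0 < t → t ≤ 1 →
      a m + t * (∑' k, a (k + (m + 1)) * t ^ k) =
      b m + t * (∑' k, b (k + (m + 1)) * t ^ k) := by
    intro t ht ht1
    have hsa' := hsum a ha hsa t ht ht1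
    have hsb' := hsum b hb hsb t ht ht1
    have h1 := h t ht ht1
    rw [← Summable.sum_add_tsum_nat_add m hsa', ← Summable.sum_add_tsum_nat_add m hsb'] at h1
    have hhead : ∑ k ∈ Finset.range m, a k * t ^ k = ∑ k ∈ Finset.range m, b k * t ^ k :=
      Finset.sum_congr rfl fun k hk => by rw [ih k (Finset.mem_range.1 hk)]
    rw [hhead] at h1
    have h2 : ∑' k, a (k + m) * t ^ (k + m) = ∑' k, b (k + m) * t ^ (k + m) :=
      add_left_cancel h1
    have hta := htail _ m hsa'
    have htb := htail _ m hsb'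
    rw [Summable.tsum_eq_zero_add hta, Summable.tsum_eq_zero_add htb] at h2
    simp only [zero_add] at h2
    have hre : ∀ (u : ℕ → ℝ), (∑' k, u (k + 1 + m) * t ^ (k + 1 + m)) =
        ((∑' k, u (k + (m + 1)) * t ^ k)) * (t * t ^ m) := by
      intro u
      rw [← tsum_mul_right]
      refine tsum_congr fun k => ?_
      have : k + 1 + m = k + (m + 1) := by ring
      rw [this]
      ring
    rw [hre a, hre b] at h2
    have h3 : (a m + t * (∑' k, a (k + (m + 1)) * t ^ k)) * t ^ m =
        (b m + t * (∑' k, b (k + (m + 1)) * t ^ k)) * t ^ m := by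
      have e1 : ∀ (x A : ℝ), (x + t * A) * t ^ m = x * t ^ m + A * (t * t ^ m) := by
        intro x A; ring
      rw [e1, e1, ← h2]
    exact mul_right_cancel₀ (pow_ne_zero m ht.ne') h3
  -- bound on tails
  have hbound : ∀ (u : ℕ → ℝ), (∀ k, 0 ≤ u k) → Summable u → ∀ t : ℝ, 0 < t → t ≤ 1 →
      (∑' k, u (k + (m + 1)) * t ^ k) ∈ Set.Icc (0:ℝ) (∑' k, u k) := by
    intro u hu hsu t ht ht1
    constructor
    · exact tsum_nonneg fun k => mul_nonneg (hu _) (by positivity)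
    · calc (∑' k, u (k + (m + 1)) * t ^ k) ≤ ∑' k, u (k + (m + 1)) := by
            refine Summable.tsum_le_tsum (fun k => ?_) (hsum _ (fun k => hu _) (htail _ _ hsu) t ht ht1)
              (htail _ _ hsu)
            calc u (k + (m + 1)) * t ^ k ≤ u (k + (m + 1)) * 1 :=
                  mul_le_mul_of_nonneg_left (pow_le_one₀ ht.le ht1) (hu _)
              _ = u (k + (m + 1)) := mul_one _
        _ ≤ ∑' k, u k := by
            refine Summable.tsum_le_tsum_of_inj (fun k => k + (m + 1))
              (add_left_injective _) (fun k _ => hu k) (fun k => le_rfl)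
              (htail _ _ hsu) hsu
  -- conclude
  have habs : ∀ t : ℝ, 0 < t → t ≤ 1 →
      |a m - b m| ≤ t * ((∑' k, a k) + (∑' k, b k)) := by
    intro t ht ht1
    have hk := key t ht ht1
    have hA := hbound a ha hsa t ht ht1
    have hB := hbound b hb hsb t ht ht1
    have : a m - b m = t * ((∑' k, b (k + (m + 1)) * t ^ k) -
        (∑' k, a (k + (m + 1)) * t ^ k)) := by linarith
    rw [this, abs_mul, abs_of_pos ht]
    refine mul_le_mul_of_nonneg_left ?_ ht.le
    rw [abs_le]
    constructor <;> nlinarith [hA.1, hA.2, hB.1, hB.2]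
  have hseq : Tendsto (fun n : ℕ => (1 / ((n : ℝ) + 1)) * ((∑' k, a k) + (∑' k, b k)))
      atTop (𝓝 0) := by
    have := tendsto_one_div_add_atTop_nhds_zero_nat (𝕜 := ℝ)
    simpa using this.mul_const ((∑' k, a k) + (∑' k, b k))
  have hle : |a m - b m| ≤ 0 := by
    refine ge_of_tendsto' hseq fun n => ?_
    exact habs (1 / ((n : ℝ) + 1)) (by positivity) (by
      rw [div_le_one (by positivity)]
      linarith [Nat.cast_nonneg (α := ℝ) n])
  have h0 := abs_nonneg (a m - b m)
  have heq : |a m - b m| = 0 := le_antisymm hle h0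
  have := abs_eq_zero.1 heq
  linarith

lemma mzv_eq_c (ns : List ℕ) (h2 : ∀ i, ns.get i = 2) : mzv ns = c ns.length := by
  rw [mzv, c, C, ENNReal.tsum_toReal_eq
    (fun f => (ENNReal.prod_lt_top fun i _ => ENNReal.ofReal_lt_top).ne)]
  refine tsum_congr fun f => ?_
  rw [ENNReal.toReal_prod]
  refine Finset.prod_congr rfl fun i _ => ?_
  rw [ENNReal.toReal_ofReal (by positivity), h2 i]

lemma c_eq_d : c = fun m : ℕ => π ^ (2 * m) / (Nat.factorial (2 * m + 1)) := by
  refine coeff_ext _ _ c_nonneg (fun m => by positivity) ?_ ?_ ?_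
  · have := (hasSum_c 1 one_pos le_rfl).summable
    simpa using this
  · have := (hasSum_d 1 one_pos).summable
    simpa using this
  · intro t ht ht1
    rw [(hasSum_c t ht ht1).tsum_eq, (hasSum_d t ht).tsum_eq]

end HoffmanAux

/-- Hoffman's identity: for `m ≥ 1`, `ζ(2,…,2)` with `m` repetitions of `2`
equals `π^(2m)/(2m+1)!`. -/
theorem hoffman_identity (m : ℕ) (hm : 1 ≤ m) :
    mzv (List.replicate m 2) = Real.pi ^ (2 * m) / (Nat.factorial (2 * m + 1)) := by
  have h := HoffmanAux.mzv_eq_c (List.replicate m 2) (fun i => by simp)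
  rw [h, List.length_replicate, congrFun HoffmanAux.c_eq_d m]
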